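/- For fixed integers j_1 ≥ 0 and b = 1, the numbers U^{(−j_1)}_n defined by the EGF Li_{−j_1}(1−e^{−m})/(1−e^{−m}) · e^{−m} satisfy U^{(−j_1)}_{n+4} ≡ U^{(−j_1)}_n (mod 10) for all n ≥ 1. -/

import Mathlib

open Finset

/-- The numbers `U^{(j)}_n` (`b = 1`), defined by the exponential generating function
`Li_j(1-e^{-m})/(1-e^{-m}) · e^{-m} = \sum_{s \ge 0} (1-e^{-m})^s e^{-m} / (s+1)^j`:
extracting the coefficient of `m^n/n!` of
`(1-e^{-m})^s e^{-m} = \sum_i C(s,i)(-1)^i e^{-(i+1)m}` term by term gives this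
(finitely supported, hence convergent) series. -/
noncomputable def U (j : ℤ) (n : ℕ) : ℝ :=
  ∑' s : ℕ, ((s : ℝ) + 1) ^ (-j) *
    ∑ i ∈ Finset.range (s + 1), (s.choose i : ℝ) * (-1) ^ i * (-((i : ℝ) + 1)) ^ n

/-- Alternating binomial sum of `(i+1)^n`. -/
def Bsum (s n : ℕ) : ℤ := ∑ i ∈ range (s + 1), (-1) ^ i * (s.choose i : ℤ) * ((i : ℤ) + 1) ^ n

lemma diff_lemma (f : ℕ → ℤ) (s : ℕ) :
    ∑ i ∈ range (s + 2), (-1) ^ i * ((s + 1).choose i : ℤ) * f i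
      = ∑ i ∈ range (s + 1), (-1) ^ i * (s.choose i : ℤ) * (f i - f (i + 1)) := by
  rw [Finset.sum_range_succ' (fun i => (-1) ^ i * ((s + 1).choose i : ℤ) * f i) (s + 1)]
  have h1 : ∀ i ∈ range (s + 1),
      (-1 : ℤ) ^ (i + 1) * ((s + 1).choose (i + 1) : ℤ) * f (i + 1)
        = -((-1) ^ i * (s.choose i : ℤ) * f (i + 1))
          + (-((-1) ^ i) * (s.choose (i + 1) : ℤ) * f (i + 1)) := by
    intro i _
    have hc : ((s + 1).choose (i + 1) : ℤ) = (s.choose i : ℤ) + (s.choose (i + 1) : ℤ) := by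
      exact_mod_cast congrArg (Nat.cast : ℕ → ℤ) (Nat.choose_succ_succ s i)
    rw [hc]; ring
  rw [Finset.sum_congr rfl h1, Finset.sum_add_distrib]
  have h2 : ∑ i ∈ range (s + 1), -((-1 : ℤ) ^ i) * (s.choose (i + 1) : ℤ) * f (i + 1)
      = ∑ i ∈ range s, -((-1 : ℤ) ^ i) * (s.choose (i + 1) : ℤ) * f (i + 1) := by
    rw [Finset.sum_range_succ, Nat.choose_succ_self]
    simp
  have h3 : ∑ i ∈ range (s + 1), (-1 : ℤ) ^ i * (s.choose i : ℤ) * f i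
      = ∑ i ∈ range s, (-1 : ℤ) ^ (i + 1) * (s.choose (i + 1) : ℤ) * f (i + 1)
        + (-1) ^ 0 * (s.choose 0 : ℤ) * f 0 :=
    Finset.sum_range_succ' (fun i => (-1 : ℤ) ^ i * (s.choose i : ℤ) * f i) s
  have h4 : ∑ i ∈ range (s + 1), (-1 : ℤ) ^ i * (s.choose i : ℤ) * (f i - f (i + 1))
      = ∑ i ∈ range (s + 1), (-1 : ℤ) ^ i * (s.choose i : ℤ) * f i
        + ∑ i ∈ range (s + 1), -((-1 : ℤ) ^ i * (s.choose i : ℤ) * f (i + 1)) := by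
    rw [← Finset.sum_add_distrib]; apply Finset.sum_congr rfl; intro i _; ring
  rw [h2, h4, h3]
  have h5 : ∑ i ∈ range s, (-1 : ℤ) ^ (i + 1) * (s.choose (i + 1) : ℤ) * f (i + 1)
      = ∑ i ∈ range s, -((-1 : ℤ) ^ i) * (s.choose (i + 1) : ℤ) * f (i + 1) := by
    apply Finset.sum_congr rfl; intro i _; ring
  rw [h5]
  simp only [Nat.choose_zero_right, pow_zero, Nat.cast_one]
  ring

lemma Bsum_vanish : ∀ s n, n < s → Bsum s n = 0 := by
  intro s
  induction s with
  | zero => intro n h; exact absurd h (Nat.not_lt_zero n)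
  | succ s ih =>
    intro n hn
    have key : Bsum (s + 1) n
        = ∑ i ∈ range (s + 1), (-1) ^ i * (s.choose i : ℤ)
            * (((i : ℤ) + 1) ^ n - ((i : ℤ) + 2) ^ n) := by
      have h := diff_lemma (fun i => ((i : ℤ) + 1) ^ n) s
      unfold Bsum
      rw [h]
      apply Finset.sum_congr rfl
      intro i _
      push_cast
      ring_nf
    have hpow : ∀ x : ℤ, x ^ n - (x + 1) ^ n
        = ∑ k ∈ range n, -(x ^ k * (n.choose k : ℤ)) := by
      intro x
      have h := add_pow x 1 n
      simp only [one_pow, mul_one] at h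
      rw [h, Finset.sum_range_succ, Nat.choose_self, Finset.sum_neg_distrib]
      push_cast
      ring
    have key2 : Bsum (s + 1) n = ∑ k ∈ range n, -((n.choose k : ℤ) * Bsum s k) := by
      rw [key]
      have step : ∀ i ∈ range (s + 1),
          (-1 : ℤ) ^ i * (s.choose i : ℤ) * (((i : ℤ) + 1) ^ n - ((i : ℤ) + 2) ^ n)
            = ∑ k ∈ range n,
                -((n.choose k : ℤ) * ((-1) ^ i * (s.choose i : ℤ) * ((i : ℤ) + 1) ^ k)) := by
        intro i _
        have h := hpow ((i : ℤ) + 1)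
        have h2 : ((i : ℤ) + 1 + 1) = (i : ℤ) + 2 := by ring
        rw [h2] at h
        rw [h, Finset.mul_sum]
        apply Finset.sum_congr rfl
        intro k _
        ring
      rw [Finset.sum_congr rfl step, Finset.sum_comm]
      apply Finset.sum_congr rfl
      intro k _
      unfold Bsum
      rw [Finset.mul_sum, ← Finset.sum_neg_distrib]
    rw [key2]
    apply Finset.sum_eq_zero
    intro k hk
    rw [ih k (by simp at hk; omega)]
    ring

/-- The integer value of the inner sum in `U`. -/
def gInt (s n : ℕ) : ℤ :=
  ∑ i ∈ range (s + 1), (s.choose i : ℤ) * (-1) ^ i * (-((i : ℤ) + 1)) ^ n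

lemma gInt_eq (s n : ℕ) : gInt s n = (-1) ^ n * Bsum s n := by
  unfold gInt Bsum
  rw [Finset.mul_sum]
  apply Finset.sum_congr rfl
  intro i _
  rw [neg_pow ((i : ℤ) + 1) n]
  ring

lemma gInt_vanish (s n : ℕ) (h : n < s) : gInt s n = 0 := by
  rw [gInt_eq, Bsum_vanish s n h, mul_zero]

lemma U_eq (j1 m : ℕ) :
    U (-(j1 : ℤ)) m = ((∑ s ∈ range (m + 1), ((s : ℤ) + 1) ^ j1 * gInt s m : ℤ) : ℝ) := by
  unfold U
  rw [neg_neg]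
  have hterm : ∀ s : ℕ, ((s : ℝ) + 1) ^ (j1 : ℤ) *
      ∑ i ∈ Finset.range (s + 1), (s.choose i : ℝ) * (-1) ^ i * (-((i : ℝ) + 1)) ^ m
        = ((((s : ℤ) + 1) ^ j1 * gInt s m : ℤ) : ℝ) := by
    intro s
    unfold gInt
    push_cast
    rw [zpow_natCast]
  have hz : ∀ s ∉ range (m + 1), ((s : ℝ) + 1) ^ (j1 : ℤ) *
      ∑ i ∈ Finset.range (s + 1), (s.choose i : ℝ) * (-1) ^ i * (-((i : ℝ) + 1)) ^ m = 0 := by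
    intro s hs
    rw [hterm s, gInt_vanish s m (by simp at hs; omega)]
    simp
  rw [tsum_eq_sum hz]
  rw [Finset.sum_congr rfl (fun s _ => hterm s)]
  push_cast
  ring

lemma ten_dvd_pow (a : ℤ) (n : ℕ) (hn : 1 ≤ n) : (10 : ℤ) ∣ a ^ (n + 4) - a ^ n := by
  have h5 : ∀ x : ZMod 10, x ^ 5 = x := by decide
  have hz : ((a ^ (n + 4) - a ^ n : ℤ) : ZMod 10) = 0 := by
    push_cast
    obtain ⟨m, rfl⟩ : ∃ m, n = m + 1 := ⟨n - 1, by omega⟩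
    have h : (a : ZMod 10) ^ (m + 1 + 4) = (a : ZMod 10) ^ m * (a : ZMod 10) ^ 5 := by ring
    rw [h, h5]
    ring
  exact (ZMod.intCast_zmod_eq_zero_iff_dvd _ _).mp hz

theorem stmt18 (j1 : ℕ) (n : ℕ) (hn : 1 ≤ n) :
    ∃ k : ℤ, U (-(j1 : ℤ)) (n + 4) - U (-(j1 : ℤ)) n = 10 * k := by
  have hU1 := U_eq j1 (n + 4)
  have hU2 := U_eq j1 n
  -- extend the second sum to range (n+5)
  have hext : ∑ s ∈ range (n + 1), ((s : ℤ) + 1) ^ j1 * gInt s n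
      = ∑ s ∈ range (n + 5), ((s : ℤ) + 1) ^ j1 * gInt s n := by
    apply Finset.sum_subset
    · intro x hx; simp at hx ⊢; omega
    · intro x _ hx
      rw [gInt_vanish x n (by simp at hx; omega)]
      ring
  set D : ℤ := ∑ s ∈ range (n + 5), ((s : ℤ) + 1) ^ j1 * (gInt s (n + 4) - gInt s n) with hD
  have hdvd : (10 : ℤ) ∣ D := by
    apply Finset.dvd_sum
    intro s _
    apply Dvd.dvd.mul_left
    unfold gInt
    rw [← Finset.sum_sub_distrib]
    apply Finset.dvd_sum
    intro i _
    have h := ten_dvd_pow (-((i : ℤ) + 1)) n hn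
    have heq : (s.choose i : ℤ) * (-1) ^ i * (-((i : ℤ) + 1)) ^ (n + 4)
        - (s.choose i : ℤ) * (-1) ^ i * (-((i : ℤ) + 1)) ^ n
        = (s.choose i : ℤ) * (-1) ^ i * ((-((i : ℤ) + 1)) ^ (n + 4) - (-((i : ℤ) + 1)) ^ n) := by
      ring
    rw [heq]
    exact Dvd.dvd.mul_left h _
  obtain ⟨k, hk⟩ := hdvd
  refine ⟨k, ?_⟩
  rw [hU1, hU2, hext]
  have hDiff : (∑ s ∈ range (n + 5), ((s : ℤ) + 1) ^ j1 * gInt s (n + 4))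
      - (∑ s ∈ range (n + 5), ((s : ℤ) + 1) ^ j1 * gInt s n) = D := by
    rw [hD, ← Finset.sum_sub_distrib]
    apply Finset.sum_congr rfl
    intro s _
    ring
  have : ((∑ s ∈ range (n + 5), ((s : ℤ) + 1) ^ j1 * gInt s (n + 4) : ℤ) : ℝ)
      - ((∑ s ∈ range (n + 5), ((s : ℤ) + 1) ^ j1 * gInt s n : ℤ) : ℝ)
      = ((D : ℤ) : ℝ) := by
    rw [← hDiff]; push_cast; ring
  rw [this, hk]
  push_cast
  ring
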